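/- Let Γ ⊆ ℂ² be a discrete additive subgroup which is free of rank 3. Let Γ_ℝ ⊆ ℂ² denote the ℝ-linear span of Γ and H = Γ_ℝ ∩ i·Γ_ℝ. Let γ ∈ Γ with γ ∉ H, and let π : ℂ² → ℂ be a surjective ℂ-linear map with kernel ℂ·γ. Then π(Γ) is a lattice in ℂ, i.e. a discrete additive subgroup of ℂ that is free of rank 2. -/

import Mathlib

open Submodule Module

theorem aux_rank {E : Type*} [NormedAddCommGroup E] [NormedSpace ℝ E] [FiniteDimensional ℝ E]
    (L : Submodule ℤ E) [DiscreteTopology L] :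
    finrank ℤ L = finrank ℝ (span ℝ (L : Set E)) := by
  set V : Submodule ℝ E := span ℝ (L : Set E) with hV
  let f : V →ₗ[ℝ] E := V.subtype
  let L₀ : Submodule ℤ V := L.comap (f.restrictScalars ℤ)
  have h_img : f '' L₀ = L := by
    rw [← LinearMap.coe_restrictScalars ℤ f, ← Submodule.map_coe (f.restrictScalars ℤ),
      Submodule.map_comap_eq_self]
    exact fun x hx ↦ LinearMap.mem_range.mpr ⟨⟨x, Submodule.subset_span hx⟩, rfl⟩
  have hd : DiscreteTopology L₀ :=
    DiscreteTopology.preimage_of_continuous_injective (L : Set E)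
      (LinearMap.continuous_of_finiteDimensional f) (injective_subtype _)
  have hz : IsZLattice ℝ L₀ := ⟨by
    rw [← (Submodule.map_injective_of_injective (injective_subtype V)).eq_iff, Submodule.map_span,
      Submodule.map_top, range_subtype, h_img]⟩
  have h1 : finrank ℤ L₀ = finrank ℝ V := ZLattice.rank ℝ L₀
  have hmap : L₀.map (f.restrictScalars ℤ) = L := SetLike.ext' h_img
  have e : L₀ ≃ₗ[ℤ] L :=
    (Submodule.equivMapOfInjective (f.restrictScalars ℤ) (injective_subtype V) L₀).trans
      (LinearEquiv.ofEq _ _ hmap)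
  rw [← e.finrank_eq, h1]

/-- bridge between an `AddSubgroup` and its `ℤ`-submodule -/
noncomputable def auxEquiv {M : Type*} [AddCommGroup M] (A : AddSubgroup M) :
    (AddSubgroup.toIntSubmodule A) ≃ₗ[ℤ] A :=
  AddEquiv.toIntLinearEquiv (AddEquiv.refl _)

/-- For `Γ ⊆ ℂ²` discrete of rank 3, `H = Γ_ℝ ∩ iΓ_ℝ`, and `γ ∈ Γ \ H`,
the image of `Γ` under a surjective `ℂ`-linear map `π : ℂ² → ℂ` with kernel `ℂγ` is a
lattice in `ℂ` (discrete and free of rank 2). -/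
theorem quotient_is_lattice
    (Γ : AddSubgroup (ℂ × ℂ)) (hdisc : DiscreteTopology Γ)
    (hfree : Nonempty (Basis (Fin 3) ℤ Γ))
    (γ : ℂ × ℂ) (hγ : γ ∈ Γ)
    (hγH : ¬(γ ∈ Submodule.span ℝ (Γ : Set (ℂ × ℂ)) ∧
      Complex.I • γ ∈ Submodule.span ℝ (Γ : Set (ℂ × ℂ))))
    (π : (ℂ × ℂ) →ₗ[ℂ] ℂ) (hπ : Function.Surjective π)
    (hker : LinearMap.ker π = Submodule.span ℂ ({γ} : Set (ℂ × ℂ))) :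
    DiscreteTopology (Γ.map π.toAddMonoidHom) ∧
      Nonempty (Basis (Fin 2) ℤ (Γ.map π.toAddMonoidHom)) := by
  set V : Submodule ℝ (ℂ × ℂ) := span ℝ (Γ : Set (ℂ × ℂ)) with hV
  have hγ0 : γ ≠ 0 := by
    rintro rfl
    exact hγH ⟨Submodule.zero_mem _, by simpa using Submodule.zero_mem V⟩
  have hγker : γ ∈ LinearMap.ker π := by
    rw [hker]; exact Submodule.subset_span rfl
  -- kernel ∩ V ⊆ ℝγ
  have hkerV : ∀ x, x ∈ LinearMap.ker π → x ∈ V → ∃ t : ℝ, x = t • γ := by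
    intro x hx hxV
    rw [hker, Submodule.mem_span_singleton] at hx
    obtain ⟨c, rfl⟩ := hx
    have hsm : ∀ (r : ℝ) (y : ℂ × ℂ), r • y = (r : ℂ) • y :=
      fun r y => (algebraMap_smul ℂ r y).symm
    by_cases hc : c.im = 0
    · refine ⟨c.re, ?_⟩
      have hcre : c = ((c.re : ℝ) : ℂ) := by
        apply Complex.ext <;> simp [hc]
      rw [hsm, ← hcre]
    · exfalso
      apply hγH
      refine ⟨Submodule.subset_span hγ, ?_⟩
      have key : Complex.I • γ = (c.im)⁻¹ • (c • γ - (c.re : ℝ) • γ) := by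
        simp only [hsm, smul_sub, smul_smul, ← sub_smul]
        congr 1
        apply Complex.ext <;> simp [hc]
      rw [key]
      exact Submodule.smul_mem _ _ (Submodule.sub_mem _ hxV
        (Submodule.smul_mem _ _ (Submodule.subset_span hγ)))
  -- Γ as ℤ-submodule
  set ΓZ : Submodule ℤ (ℂ × ℂ) := AddSubgroup.toIntSubmodule Γ with hΓZ
  have hdZ : DiscreteTopology ΓZ := hdisc
  have bZ : Basis (Fin 3) ℤ ΓZ := hfree.some.map (auxEquiv Γ).symm
  have hΓfin : Module.Finite ℤ ΓZ := Module.Finite.of_basis bZ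
  have hrankΓ : finrank ℤ ΓZ = 3 := by
    rw [finrank_eq_card_basis bZ, Fintype.card_fin]
  have hdimV : finrank ℝ V = 3 := by
    rw [hV, show (Γ : Set (ℂ × ℂ)) = (ΓZ : Set (ℂ × ℂ)) from rfl, ← aux_rank ΓZ, hrankΓ]
  -- the kernel part of the lattice
  set Γ₁ : Submodule ℤ (ℂ × ℂ) := ΓZ ⊓ ((LinearMap.ker π).restrictScalars ℤ) with hΓ₁
  have hmem₁ : ∀ x, x ∈ Γ₁ ↔ x ∈ Γ ∧ π x = 0 := by
    intro x
    rw [hΓ₁, Submodule.mem_inf, Submodule.restrictScalars_mem, LinearMap.mem_ker]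
    exact Iff.rfl
  have hd₁ : DiscreteTopology Γ₁ := by
    refine DiscreteTopology.of_subset (s := (Γ : Set (ℂ × ℂ))) hdisc ?_
    intro x hx
    exact ((hmem₁ x).mp hx).1
  have hγ₁ : γ ∈ Γ₁ := (hmem₁ γ).mpr ⟨hγ, hγker⟩
  have hspan₁ : span ℝ (Γ₁ : Set (ℂ × ℂ)) = span ℝ ({γ} : Set (ℂ × ℂ)) := by
    apply le_antisymm
    · rw [Submodule.span_le]
      intro x hx
      obtain ⟨t, rfl⟩ := hkerV x (((hmem₁ x).mp hx).2) (Submodule.subset_span (((hmem₁ x).mp hx).1))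
      exact Submodule.smul_mem _ _ (Submodule.subset_span rfl)
    · rw [Submodule.span_le, Set.singleton_subset_iff]
      exact Submodule.subset_span hγ₁
  have hrank₁ : finrank ℤ Γ₁ = 1 := by
    rw [aux_rank Γ₁, hspan₁, finrank_span_singleton hγ0]
  -- generator δ of Γ₁
  haveI := hd₁
  have bδ : Basis (Fin 1) ℤ Γ₁ := (Module.finBasis ℤ Γ₁).reindex (finCongr hrank₁)
  set δ : ℂ × ℂ := (bδ 0 : ℂ × ℂ) with hδdef
  have hδΓ₁ : δ ∈ Γ₁ := (bδ 0).2
  have hδΓ : δ ∈ Γ := ((hmem₁ δ).mp hδΓ₁).1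
  have hδker : π δ = 0 := ((hmem₁ δ).mp hδΓ₁).2
  have hδ0 : δ ≠ 0 := by
    intro h
    exact bδ.ne_zero 0 (Subtype.ext h)
  have hΓ₁δ : ∀ x ∈ Γ₁, ∃ n : ℤ, x = n • δ := by
    intro x hx
    refine ⟨bδ.repr ⟨x, hx⟩ 0, ?_⟩
    have := bδ.sum_repr ⟨x, hx⟩
    rw [Fin.sum_univ_one] at this
    exact congrArg Subtype.val this.symm
  -- the image lattice as a ℤ-submodule
  set πZ : (ℂ × ℂ) →ₗ[ℤ] ℂ := π.toAddMonoidHom.toIntLinearMap with hπZ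
  have hπZapp : ∀ x, πZ x = π x := fun x => rfl
  set L : Submodule ℤ ℂ := ΓZ.map πZ with hL
  have hmemL : ∀ x, x ∈ L ↔ ∃ y ∈ Γ, π y = x := by
    intro x
    rw [hL, Submodule.mem_map]
    exact Iff.rfl
  haveI hLfin : Module.Finite ℤ L := Module.Finite.map ΓZ πZ
  haveI hLfree : Module.Free ℤ L := Module.free_of_finite_type_torsion_free'
  set r : ℕ := finrank ℤ L with hr
  have lbas : Basis (Fin r) ℤ L := Module.finBasis ℤ L
  -- lifts of the basis of L
  have hglift : ∀ j : Fin r, ∃ y, y ∈ Γ ∧ π y = (lbas j : ℂ) :=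
    fun j => by
      obtain ⟨y, hy, hyeq⟩ := (hmemL (lbas j : ℂ)).mp (lbas j).2
      exact ⟨y, hy, hyeq⟩
  choose g hgΓ hgπ using hglift
  -- decomposition of elements of Γ
  have hdecomp : ∀ x ∈ Γ, ∃ (n : ℤ) (c : Fin r → ℤ), x = n • δ + ∑ j, c j • g j := by
    intro x hx
    have hLx : π x ∈ L := (hmemL (π x)).mpr ⟨x, hx, rfl⟩
    set c : Fin r → ℤ := fun j => lbas.repr ⟨π x, hLx⟩ j with hc
    have hsum : π (∑ j, c j • g j) = π x := by
      rw [map_sum]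
      have : ∀ j, π (c j • g j) = c j • (lbas j : ℂ) := by
        intro j
        rw [map_zsmul, hgπ]
      simp_rw [this]
      have := lbas.sum_repr ⟨π x, hLx⟩
      calc ∑ j, c j • (lbas j : ℂ) = ((∑ j, c j • lbas j : L) : ℂ) := by push_cast; rfl
        _ = π x := by rw [this]
    have hx1 : x - ∑ j, c j • g j ∈ Γ₁ := by
      refine (hmem₁ _).mpr ⟨AddSubgroup.sub_mem Γ hx (AddSubgroup.sum_mem Γ (fun j _ =>
        AddSubgroup.zsmul_mem Γ (hgΓ j) _)), ?_⟩
      rw [map_sub, hsum, sub_self]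
    obtain ⟨n, hn⟩ := hΓ₁δ _ hx1
    exact ⟨n, c, by rw [← hn]; abel⟩
  -- the family δ, g 0, ..., g (r-1)
  set w : Fin (r + 1) → ℂ × ℂ := Fin.cons δ g with hw
  have hwΓ : ∀ i, w i ∈ Γ := by
    intro i
    refine Fin.cases ?_ ?_ i <;> simp only [hw, Fin.cons_zero, Fin.cons_succ]
    · exact hδΓ
    · exact hgΓ
  -- ℤ-linear independence of w
  have hwli : LinearIndependent ℤ w := by
    rw [Fintype.linearIndependent_iff]
    intro a ha
    rw [Fin.sum_univ_succ] at ha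
    simp only [hw, Fin.cons_zero, Fin.cons_succ] at ha
    have hg0 : π (∑ j : Fin r, a j.succ • g j) = ((∑ j : Fin r, a j.succ • lbas j : L) : ℂ) := by
      rw [map_sum]
      push_cast
      congr 1
      ext j
      rw [map_zsmul, hgπ]
    have hsum0 : (∑ j : Fin r, a j.succ • lbas j : L) = 0 := by
      have := congrArg π ha
      rw [map_add, map_zsmul, hδker, smul_zero, zero_add, map_zero, hg0] at this
      exact (ZeroMemClass.coe_eq_zero).mp (by exact_mod_cast this)
    have hax : ∀ j : Fin r, a j.succ = 0 := by
      have := Fintype.linearIndependent_iff.mp lbas.linearIndependent _ hsum0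
      exact fun j => this j
    have ha0 : a 0 = 0 := by
      rw [Finset.sum_eq_zero (fun j _ => by rw [hax j, zero_smul]), add_zero] at ha
      rcases smul_eq_zero.mp ha with h | h
      · exact h
      · exact absurd h hδ0
    intro i
    refine Fin.cases ha0 hax i
  -- upper bound : r + 1 ≤ 3
  have hub : r + 1 ≤ 3 := by
    have hwZ : LinearIndependent ℤ (fun i => (⟨w i, hwΓ i⟩ : ΓZ)) := by
      apply LinearIndependent.of_comp ΓZ.subtype
      convert hwli
      rfl
    have := hwZ.fintype_card_le_finrank
    rwa [Fintype.card_fin, hrankΓ] at this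
  -- lower bound : 3 ≤ r + 1
  have hVle : V ≤ span ℝ (Set.range w) := by
    rw [hV, Submodule.span_le]
    intro x hx
    obtain ⟨n, c, rfl⟩ := hdecomp x hx
    refine Submodule.add_mem _ (zsmul_mem ?_ _) (Submodule.sum_mem _ (fun j _ =>
      zsmul_mem ?_ _))
    · exact Submodule.subset_span ⟨0, by simp [hw]⟩
    · exact Submodule.subset_span ⟨j.succ, by simp [hw]⟩
  have hlb : 3 ≤ r + 1 := by
    have h1 : finrank ℝ V ≤ finrank ℝ (span ℝ (Set.range w)) :=
      Submodule.finrank_mono hVle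
    have h2 : finrank ℝ (span ℝ (Set.range w)) ≤ r + 1 := by
      have h3 := finrank_span_le_card (R := ℝ) (Set.range w)
      rw [Set.toFinset_range] at h3
      exact h3.trans ((Finset.card_image_le).trans (by simp))
    calc 3 = finrank ℝ V := hdimV.symm
      _ ≤ finrank ℝ (span ℝ (Set.range w)) := h1
      _ ≤ r + 1 := h2
  have hr2 : r = 2 := by omega
  -- ℝ-linear independence of w
  have hwV : ∀ i, w i ∈ V := fun i => Submodule.subset_span (hwΓ i)
  have hspanw : span ℝ (Set.range w) = V := by
    apply le_antisymm
    · rw [Submodule.span_le]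
      rintro x ⟨i, rfl⟩
      exact hwV i
    · exact hVle
  have hwliR : LinearIndependent ℝ w := by
    set wV : Fin (r + 1) → V := fun i => ⟨w i, hwV i⟩ with hwVdef
    have htop : ⊤ ≤ span ℝ (Set.range wV) := by
      have himg : V.subtype '' Set.range wV = Set.range w := by
        ext x
        constructor
        · rintro ⟨y, ⟨i, rfl⟩, rfl⟩; exact ⟨i, rfl⟩
        · rintro ⟨i, rfl⟩; exact ⟨wV i, ⟨i, rfl⟩, rfl⟩
      have heq : span ℝ (Set.range wV) = ⊤ := by
        apply Submodule.map_injective_of_injective (Submodule.injective_subtype V)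
        rw [Submodule.map_span, Submodule.map_top, Submodule.range_subtype, himg, hspanw]
      exact heq.ge
    have hcard : Fintype.card (Fin (r + 1)) = finrank ℝ V := by
      rw [Fintype.card_fin, hdimV, hr2]
    have := linearIndependent_of_top_le_span_of_card_eq_finrank htop hcard
    have h2 := this.map' V.subtype (Submodule.ker_subtype V)
    convert h2
    all_goals rfl
  -- ℝ-linear independence of the images π (g j)
  set u : Fin r → ℂ := fun j => π (g j) with hu
  have huli : LinearIndependent ℝ u := by
    rw [Fintype.linearIndependent_iff]
    intro a ha
    have hmemV : (∑ j, a j • g j) ∈ V :=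
      Submodule.sum_mem _ (fun j _ => Submodule.smul_mem _ _ (Submodule.subset_span (hgΓ j)))
    have hmemker : (∑ j, a j • g j) ∈ LinearMap.ker π := by
      rw [LinearMap.mem_ker, map_sum]
      simp_rw [LinearMap.map_smul_of_tower]
      exact ha
    obtain ⟨t, hteq⟩ := hkerV _ hmemker hmemV
    obtain ⟨m, hm⟩ := hΓ₁δ γ hγ₁
    -- so ∑ a j • g j = (t * m) • δ
    have hcomb : (0 : ℂ × ℂ) = (-(t * (m : ℝ))) • δ + ∑ j, a j • g j := by
      rw [hteq, hm, ← Int.cast_smul_eq_zsmul ℝ m δ, smul_smul, neg_smul]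
      simp
    have := Fintype.linearIndependent_iff.mp hwliR (Fin.cons (-(t * (m : ℝ))) a) ?_
    · intro j
      have := this j.succ
      rwa [Fin.cons_succ] at this
    · rw [Fin.sum_univ_succ]
      simp only [hw, Fin.cons_zero, Fin.cons_succ]
      exact hcomb.symm
  -- u gives an ℝ-basis of ℂ
  haveI : Nonempty (Fin r) := ⟨⟨0, by omega⟩⟩
  have hcardu : Fintype.card (Fin r) = finrank ℝ ℂ := by
    rw [Fintype.card_fin, hr2, Complex.finrank_real_complex]
  let bC := basisOfLinearIndependentOfCardEqFinrank huli hcardu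
  have hbC : ⇑bC = u := coe_basisOfLinearIndependentOfCardEqFinrank huli hcardu
  -- identification of the image subgroup
  have hLeq : Γ.map π.toAddMonoidHom = (span ℤ (Set.range u)).toAddSubgroup := by
    ext x
    rw [Submodule.mem_toAddSubgroup]
    constructor
    · rintro ⟨y, hy, rfl⟩
      obtain ⟨n, c, rfl⟩ := hdecomp y hy
      have heq : π (n • δ + ∑ j, c j • g j) = ∑ j, c j • u j := by
        rw [map_add, map_zsmul, hδker, smul_zero, zero_add, map_sum]
        simp_rw [map_zsmul]
        rfl
      rw [show π.toAddMonoidHom (n • δ + ∑ j, c j • g j)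
          = π (n • δ + ∑ j, c j • g j) from rfl, heq]
      exact Submodule.sum_mem _ (fun j _ =>
        zsmul_mem (Submodule.subset_span (Set.mem_range_self j)) _)
    · intro hx
      have hle : span ℤ (Set.range u) ≤ L := by
        rw [Submodule.span_le]
        rintro _ ⟨j, rfl⟩
        exact (hmemL _).mpr ⟨g j, hgΓ j, rfl⟩
      obtain ⟨y, hy, hyeq⟩ := (hmemL x).mp (hle hx)
      exact ⟨y, hy, hyeq⟩
  constructor
  · -- discreteness
    have hrange : Set.range u = Set.range ⇑bC := by rw [hbC]
    have hdsp : DiscreteTopology (span ℤ (Set.range u)) := by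
      rw [hrange]
      infer_instance
    rw [hLeq]
    exact hdsp
  · -- freeness of rank 2
    have hLeq2 : L = AddSubgroup.toIntSubmodule (Γ.map π.toAddMonoidHom) := by
      ext x
      rw [hmemL]
      exact ⟨fun ⟨y, hy, hyeq⟩ => ⟨y, hy, hyeq⟩, fun ⟨y, hy, hyeq⟩ => ⟨y, hy, hyeq⟩⟩
    exact ⟨((lbas.map (LinearEquiv.ofEq _ _ hLeq2)).map
      (auxEquiv (Γ.map π.toAddMonoidHom))).reindex (finCongr hr2)⟩
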